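/- If φ = ∑_{i=1}^h cᵢxᵢ is a linear form with integer coefficients and A is a φ-Sidon set of integers, then A(t) = |{a ∈ A : |a| ≤ t}| satisfies A(t)^h ≤ 2Ct + 1 for all t ≥ 0, where C = ∑_{i=1}^h |cᵢ|; in particular A(t) ≪ t^{1/h}. -/
import Mathlib


open Finset

/-- `A` is a Sidon set of integers for the linear form `φ = ∑ cᵢ xᵢ` with integer
coefficients. -/
def IsSidonSetZ {h : ℕ} (c : Fin h → ℤ) (A : Set ℤ) : Prop :=
  A.Nonempty ∧ ∀ a a' : Fin h → ℤ, (∀ i, a i ∈ A) → (∀ i, a' i ∈ A) →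
    ∑ i, c i * a i = ∑ i, c i * a' i → a = a'

theorem sidon_counting_bound_int {h : ℕ} (hh : 0 < h) (c : Fin h → ℤ)
    (A : Set ℤ) (hA : IsSidonSetZ c A) :
    (∀ t : ℝ, 0 ≤ t →
      (({a ∈ A | |(a : ℝ)| ≤ t}.ncard : ℝ)) ^ h ≤
        2 * (∑ i, |(c i : ℝ)|) * t + 1) ∧
    ∃ K : ℝ, 0 < K ∧ ∀ t : ℝ, 1 ≤ t →
      (({a ∈ A | |(a : ℝ)| ≤ t}.ncard : ℝ)) ≤ K * t ^ ((1 : ℝ) / h) := by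
  classical
  set C : ℤ := ∑ i, |c i| with hC
  have hC0 : 0 ≤ C := Finset.sum_nonneg fun i _ => abs_nonneg _
  have hCcast : (∑ i, |(c i : ℝ)|) = (C : ℝ) := by
    rw [hC]; push_cast; rfl
  have key : ∀ t : ℝ, 0 ≤ t →
      (({a ∈ A | |(a : ℝ)| ≤ t}.ncard : ℝ)) ^ h ≤ 2 * (C : ℝ) * t + 1 := by
    intro t ht
    set n : ℤ := ⌊t⌋ with hn
    have hn0 : 0 ≤ n := Int.floor_nonneg.2 ht
    have hnt : (n : ℝ) ≤ t := Int.floor_le t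
    have hmem : ∀ a : ℤ, (|(a : ℝ)| ≤ t ↔ |a| ≤ n) := by
      intro a
      rw [← Int.cast_abs, hn, Int.le_floor]
    set F : Finset ℤ := (Finset.Icc (-n) n).filter (· ∈ A) with hF
    have hset : {a ∈ A | |(a : ℝ)| ≤ t} = ↑F := by
      ext a
      simp only [Set.mem_setOf_eq, hF, Finset.coe_filter, Finset.mem_Icc]
      rw [hmem a, abs_le]
      tauto
    have hcard : {a ∈ A | |(a : ℝ)| ≤ t}.ncard = F.card := by
      rw [hset, Set.ncard_coe_finset]
    rw [hcard]
    have hmemF : ∀ (a : Fin h → ℤ), a ∈ Fintype.piFinset (fun _ : Fin h => F) →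
        (∀ i, a i ∈ A) ∧ ∀ i, |a i| ≤ n := by
      intro a ha
      have := Fintype.mem_piFinset.1 ha
      constructor
      · intro i; exact (Finset.mem_filter.1 (this i)).2
      · intro i
        have := (Finset.mem_filter.1 (this i)).1
        rw [Finset.mem_Icc] at this
        exact abs_le.2 this
    have hinj : Set.InjOn (fun a : Fin h → ℤ => ∑ i, c i * a i)
        ↑(Fintype.piFinset (fun _ : Fin h => F)) := by
      intro a ha a' ha' hsum
      exact hA.2 a a' (hmemF a ha).1 (hmemF a' ha').1 hsum
    have hmaps : ∀ a ∈ Fintype.piFinset (fun _ : Fin h => F),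
        (∑ i, c i * a i) ∈ Finset.Icc (-(C * n)) (C * n) := by
      intro a ha
      rw [Finset.mem_Icc]
      have habs : |∑ i, c i * a i| ≤ C * n := by
        calc |∑ i, c i * a i| ≤ ∑ i, |c i * a i| := Finset.abs_sum_le_sum_abs _ _
          _ = ∑ i, |c i| * |a i| := by simp [abs_mul]
          _ ≤ ∑ i, |c i| * n := Finset.sum_le_sum fun i _ =>
              mul_le_mul_of_nonneg_left ((hmemF a ha).2 i) (abs_nonneg _)
          _ = C * n := by rw [hC, ← Finset.sum_mul]
      exact ⟨neg_le_of_abs_le habs, le_of_abs_le habs⟩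
    have hcount := Finset.card_le_card_of_injOn _ hmaps hinj
    rw [Fintype.card_piFinset] at hcount
    have hicc : (Finset.Icc (-(C * n)) (C * n)).card = (2 * (C * n) + 1).toNat := by
      rw [Int.card_Icc]; congr 1; ring
    have hCn : 0 ≤ C * n := mul_nonneg hC0 hn0
    have hcount2 : (F.card : ℤ) ^ h ≤ 2 * (C * n) + 1 := by
      have := hcount
      rw [hicc] at this
      simp only [Finset.prod_const, Finset.card_univ, Fintype.card_fin] at this
      have h2 : ((F.card ^ h : ℕ) : ℤ) ≤ (((2 * (C * n) + 1).toNat : ℕ) : ℤ) :=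
        Int.ofNat_le.2 this
      rwa [Int.toNat_of_nonneg (by linarith), Nat.cast_pow] at h2
    have hcast : ((F.card : ℝ)) ^ h ≤ 2 * ((C : ℝ) * (n : ℝ)) + 1 := by
      exact_mod_cast hcount2
    have hmono : (C : ℝ) * (n : ℝ) ≤ (C : ℝ) * t :=
      mul_le_mul_of_nonneg_left hnt (by exact_mod_cast hC0)
    calc ((F.card : ℝ)) ^ h ≤ 2 * ((C : ℝ) * (n : ℝ)) + 1 := hcast
      _ ≤ 2 * (C : ℝ) * t + 1 := by linarith
  constructor
  · intro t ht
    rw [hCcast]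
    exact key t ht
  · refine ⟨2 * (C : ℝ) + 1, by positivity, fun t ht => ?_⟩
    have ht0 : (0 : ℝ) ≤ t := by linarith
    set x : ℝ := (({a ∈ A | |(a : ℝ)| ≤ t}.ncard : ℝ)) with hx
    have hx0 : 0 ≤ x := Nat.cast_nonneg _
    have h1 : x ^ h ≤ (2 * (C : ℝ) + 1) * t := by
      have := key t ht0
      have hCt : (C : ℝ) * 1 ≤ (C : ℝ) * t :=
        mul_le_mul_of_nonneg_left ht (by exact_mod_cast hC0)
      nlinarith
    have hB0 : (0 : ℝ) ≤ (2 * (C : ℝ) + 1) * t := by positivity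
    have hhne : (h : ℝ) ≠ 0 := Nat.cast_ne_zero.2 hh.ne'
    have hxeq : x = (x ^ h) ^ ((1 : ℝ) / h) := by
      rw [← Real.rpow_natCast x h, ← Real.rpow_mul hx0]
      rw [mul_one_div, div_self hhne, Real.rpow_one]
    have h2 : x ≤ ((2 * (C : ℝ) + 1) * t) ^ ((1 : ℝ) / h) := by
      rw [hxeq]
      exact Real.rpow_le_rpow (by positivity) h1 (by positivity)
    have h3 : ((2 * (C : ℝ) + 1) * t) ^ ((1 : ℝ) / h)
        = (2 * (C : ℝ) + 1) ^ ((1 : ℝ) / h) * t ^ ((1 : ℝ) / h) :=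
      Real.mul_rpow (by positivity) ht0
    have h4 : (2 * (C : ℝ) + 1) ^ ((1 : ℝ) / h) ≤ 2 * (C : ℝ) + 1 := by
      have hb1 : (1 : ℝ) ≤ 2 * (C : ℝ) + 1 := by
        have : (0:ℝ) ≤ (C:ℝ) := by exact_mod_cast hC0
        linarith
      calc (2 * (C : ℝ) + 1) ^ ((1 : ℝ) / h)
          ≤ (2 * (C : ℝ) + 1) ^ (1 : ℝ) :=
            Real.rpow_le_rpow_of_exponent_le hb1 (by
              rw [div_le_one (by positivity)]
              exact_mod_cast Nat.one_le_iff_ne_zero.2 hh.ne')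
        _ = 2 * (C : ℝ) + 1 := Real.rpow_one _
    calc x ≤ ((2 * (C : ℝ) + 1) * t) ^ ((1 : ℝ) / h) := h2
      _ = (2 * (C : ℝ) + 1) ^ ((1 : ℝ) / h) * t ^ ((1 : ℝ) / h) := h3
      _ ≤ (2 * (C : ℝ) + 1) * t ^ ((1 : ℝ) / h) :=
          mul_le_mul_of_nonneg_right h4 (Real.rpow_nonneg ht0 _)
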